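/- arXiv:1702.03608 — 2 statements merged into one kernel-verified Lean document; each statement's English description precedes it below -/
import Mathlib

section
/- In the twisted polynomial ring K{x, δ_m}, for every nonzero integer d and every natural number k, (t^d x)^k = Σ_{j=0}^{k-1} a_j t^{kd + (m-1)j} x^{k-j} for some constants a_j ∈ ℂ with a_0 = 1. -/
set_option maxHeartbeats 1000000
set_option synthInstance.maxHeartbeats 1000000

noncomputable section

/-- `K = ℂ((t))`, the field of formal Laurent series. -/
abbrev K : Type := LaurentSeries ℂ

/-- The derivation `d = t * d/dt` on `K`, acting on coefficients by `cₙ ↦ n * cₙ`. -/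
def dd : K →ₗ[ℂ] K where
  toFun f :=
    { coeff := fun n => (n : ℂ) * f.coeff n
      isPWO_support' := f.isPWO_support'.mono (fun n hn => by
        simp only [Function.mem_support, ne_eq] at hn ⊢
        exact fun h => hn (by rw [h, mul_zero])) }
  map_add' f g := by
    ext n
    simp [mul_add]
  map_smul' c f := by
    ext n
    simp [HahnSeries.coeff_smul]
    ring

/-- Multiplication by `a ∈ K` as a `ℂ`-linear endomorphism of `K`. -/
def mulOp (a : K) : Module.End ℂ K where
  toFun f := a * f
  map_add' := mul_add a
  map_smul' c f := by
    simp only [RingHom.id_apply]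
    rw [← HahnSeries.single_zero_mul_eq_smul, ← HahnSeries.single_zero_mul_eq_smul]
    ring

/-- `d = t d/dt` as an endomorphism. -/
def ddE : Module.End ℂ K := dd

/-- The element `t ∈ K`. -/
def tK : K := HahnSeries.single (1 : ℤ) (1 : ℂ)

/-- The element `t^i ∈ K` for `i : ℤ`. -/
def tpow (i : ℤ) : K := HahnSeries.single i (1 : ℂ)

/-- The operator corresponding to the variable `x` of the twisted polynomial ring
`K{x, δ_m}`, i.e. the derivation `δ_m = t^m d/dt = t^(m-1) ⬝ (t d/dt)`. -/
def Xop (m : ℕ) : Module.End ℂ K := mulOp (tK ^ (m - 1)) * ddE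

/-- The inclusion `O = ℂ[[t]] → K`. -/
def ofPS : PowerSeries ℂ →+* K := HahnSeries.ofPowerSeries ℤ ℂ

/-- The operator attached to a twisted polynomial `Σ_{i ≤ n} a_i x^i` with
coefficients `a_i ∈ O = ℂ[[t]]`, in `K{x, δ_m}`. -/
def opO (m n : ℕ) (a : ℕ → PowerSeries ℂ) : Module.End ℂ K :=
  ∑ i ∈ Finset.range (n + 1), mulOp (ofPS (a i)) * (Xop m) ^ i

/-- Reduction mod `t` of a twisted polynomial with coefficients in `O`. -/
def red (n : ℕ) (a : ℕ → PowerSeries ℂ) : Polynomial ℂ :=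
  ∑ i ∈ Finset.range (n + 1), Polynomial.C (PowerSeries.constantCoeff (a i)) * Polynomial.X ^ i

/-- The embedding `K → K`, `t ↦ t^q`, realising `K` as the subfield `ℂ((s^q)) ⊆ ℂ((s))`. -/
def embHom (q : ℕ) (hq : 0 < q) : K →+* K :=
  HahnSeries.embDomainRingHom (AddMonoidHom.mk' (fun n => (q : ℤ) * n) (by intro a b; ring))
    (fun a b h => by
      simpa using mul_left_cancel₀ (by exact_mod_cast hq.ne' : (q : ℤ) ≠ 0) h)
    (fun a b => by
      constructor
      · intro h; exact le_of_mul_le_mul_left h (by exact_mod_cast hq)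
      · intro h; exact mul_le_mul_of_nonneg_left h (by positivity))


lemma mulOp_mul (a b : K) : mulOp (a * b) = mulOp a * mulOp b := by
  ext f; simp [mulOp, Module.End.mul_apply, mul_assoc]

lemma mulOp_smul (c : ℂ) (a : K) : mulOp (c • a) = c • mulOp a := by
  refine LinearMap.ext fun f => ?_
  show (c • a) * f = c • (a * f)
  rw [← HahnSeries.single_zero_mul_eq_smul, ← HahnSeries.single_zero_mul_eq_smul, mul_assoc]

lemma tpow_mul_tpow (i j : ℤ) : tpow i * tpow j = tpow (i + j) := by
  simp [tpow, HahnSeries.single_mul_single]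

lemma tK_pow (n : ℕ) : tK ^ n = tpow n := by
  simp [tK, tpow, HahnSeries.single_pow]

lemma tpow_mul_coeff (i : ℤ) (f : K) (n : ℤ) :
    (tpow i * f).coeff n = f.coeff (n - i) := by
  have : n = (n - i) + i := by ring
  rw [this, tpow, HahnSeries.coeff_single_mul_add, one_mul]
  simp

lemma dd_tpow_mul (i : ℤ) (f : K) :
    dd (tpow i * f) = tpow i * dd f + (i : ℂ) • (tpow i * f) := by
  ext n
  simp only [HahnSeries.coeff_add, HahnSeries.coeff_smul]
  show (n : ℂ) * (tpow i * f).coeff n = (tpow i * dd f).coeff n + (i:ℂ) * (tpow i * f).coeff n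
  rw [tpow_mul_coeff, tpow_mul_coeff]
  show (n:ℂ) * f.coeff (n - i) = ((n - i : ℤ):ℂ) * f.coeff (n - i) + (i:ℂ) * f.coeff (n - i)
  push_cast
  ring

lemma mul_smul_K (c : ℂ) (a b : K) : a * (c • b) = c • (a * b) := by
  rw [← HahnSeries.single_zero_mul_eq_smul, ← HahnSeries.single_zero_mul_eq_smul,
    ← mul_assoc, ← mul_assoc, mul_comm a]

lemma smul_mul_K (c : ℂ) (a b : K) : (c • a) * b = c • (a * b) := by
  rw [← HahnSeries.single_zero_mul_eq_smul, ← HahnSeries.single_zero_mul_eq_smul, mul_assoc]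

lemma mulOp_zero : mulOp (0 : K) = 0 := by
  refine LinearMap.ext fun f => ?_
  show (0 : K) * f = 0
  rw [zero_mul]

lemma Xop_mulOp_tpow (m : ℕ) (hm : 1 ≤ m) (i : ℤ) :
    Xop m * mulOp (tpow i) =
      mulOp (tpow i) * Xop m + (i : ℂ) • mulOp (tpow (i + ((m : ℤ) - 1))) := by
  have e : ((m - 1 : ℕ) : ℤ) = (m : ℤ) - 1 := by omega
  refine LinearMap.ext fun f => ?_
  show Xop m (tpow i * f) = tpow i * (Xop m f) + (i : ℂ) • (tpow (i + ((m:ℤ)-1)) * f)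
  simp only [Xop, Module.End.mul_apply]
  show tK ^ (m-1) * dd (tpow i * f) =
    tpow i * (tK ^ (m-1) * dd f) + (i : ℂ) • (tpow (i + ((m:ℤ)-1)) * f)
  rw [dd_tpow_mul, tK_pow, e, mul_add, mul_smul_K, ← mul_assoc, ← mul_assoc,
    ← mul_assoc, tpow_mul_tpow, tpow_mul_tpow, add_comm ((m:ℤ)-1) i]

lemma key' (m : ℕ) (hm : 1 ≤ m) (c : ℂ) (s : ℤ) :
    Xop m * mulOp (c • tpow s) =
      mulOp (c • tpow s) * Xop m + mulOp ((c * (s : ℂ)) • tpow (s + ((m : ℤ) - 1))) := by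
  rw [mulOp_smul, mul_smul_comm, Xop_mulOp_tpow m hm s, smul_add, smul_smul,
    ← smul_mul_assoc, ← mulOp_smul, mul_comm c, ← mulOp_smul, mul_comm (s:ℂ) c]

lemma mulOp_tpow_smul_mul (d : ℤ) (c : ℂ) (s : ℤ) :
    mulOp (tpow d) * mulOp (c • tpow s) = mulOp (c • tpow (d + s)) := by
  rw [← mulOp_mul, mul_smul_K, tpow_mul_tpow]

lemma step (m : ℕ) (hm : 1 ≤ m) (d s : ℤ) (c : ℂ) (p : ℕ) :
    (mulOp (tpow d) * Xop m) * (mulOp (c • tpow s) * Xop m ^ p) =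
      mulOp (c • tpow (d + s)) * Xop m ^ (p + 1) +
      mulOp ((c * (s : ℂ)) • tpow (d + s + ((m : ℤ) - 1))) * Xop m ^ p := by
  rw [mul_assoc, ← mul_assoc (Xop m), key' m hm c s, add_mul, mul_add]
  simp only [← mul_assoc]
  rw [mulOp_tpow_smul_mul, mulOp_tpow_smul_mul, mul_assoc, ← pow_succ',
    ← add_assoc d s ((m:ℤ)-1)]

lemma zero_smul_K (v : K) : (0:ℂ) • v = 0 := by
  ext n; simp [HahnSeries.coeff_smul]

lemma add_smul_K (x y : ℂ) (v : K) : (x + y) • v = x • v + y • v := by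
  ext n; simp [HahnSeries.coeff_smul, add_mul]

lemma mulOp_add (u v : K) : mulOp (u + v) = mulOp u + mulOp v := by
  refine LinearMap.ext fun f => ?_
  show (u + v) * f = u * f + v * f
  rw [add_mul]

lemma main_aux (m : ℕ) (hm : 1 ≤ m) (d : ℤ) (k : ℕ) (hk : 1 ≤ k) :
    ∃ a : ℕ → ℂ, a 0 = 1 ∧ (∀ j, k ≤ j → a j = 0) ∧
      (mulOp (tpow d) * Xop m) ^ k =
        ∑ j ∈ Finset.range k,
          mulOp (a j • tpow ((k : ℤ) * d + ((m : ℤ) - 1) * (j : ℤ))) * Xop m ^ (k - j) := by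
  induction k, hk using Nat.le_induction with
  | base =>
    refine ⟨fun j => if j = 0 then 1 else 0, rfl, ?_, ?_⟩
    · intro j hj
      simp [Nat.one_le_iff_ne_zero.mp hj]
    · simp [pow_one]
  | succ k hk ih =>
    obtain ⟨a, ha0, haz, heq⟩ := ih
    set e : ℤ := (m : ℤ) - 1 with he
    set g : ℕ → ℂ := fun j => match j with
      | 0 => 0
      | (i+1) => a i * (((k : ℤ) * d + e * i : ℤ) : ℂ) with hg
    refine ⟨fun j => a j + g j, by simp [ha0, hg], ?_, ?_⟩
    · intro j hj
      match j, hj with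
      | (i+1), hj =>
        have h1 : a (i+1) = 0 := haz _ (by omega)
        have h2 : a i = 0 := haz _ (by omega)
        simp [hg, h1, h2]
    · simp only [Nat.cast_add, Nat.cast_one]
      set A := mulOp (tpow d) * Xop m with hA
      set T : ℂ → ℕ → Module.End ℂ K := fun c j =>
        mulOp (c • tpow (((k : ℤ) + 1) * d + e * j)) * Xop m ^ (k + 1 - j) with hT
      have hstep : ∀ j ∈ Finset.range k,
          A * (mulOp (a j • tpow ((k : ℤ) * d + e * j)) * Xop m ^ (k - j))
            = T (a j) j + T (g (j+1)) (j+1) := by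
        intro j hj
        rw [Finset.mem_range] at hj
        rw [step m hm d ((k : ℤ) * d + e * j) (a j) (k - j)]
        have h1 : d + ((k:ℤ)*d + e*j) = ((k:ℤ)+1)*d + e*j := by ring
        have h2 : (k - j) + 1 = (k+1) - j := by omega
        have h4 : k - j = (k+1) - (j+1) := by omega
        rw [h1, h2, h4, ← he]
        have h3 : ((k:ℤ)+1)*d + e*(j:ℤ) + e = ((k:ℤ)+1)*d + e*((j:ℤ)+1) := by ring
        rw [h3]
        simp only [hT, hg]
        push_cast
        ring_nf
      calc A ^ (k+1) = A * A ^ k := pow_succ' A k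
        _ = ∑ j ∈ Finset.range k, (T (a j) j + T (g (j+1)) (j+1)) := by
            rw [heq, Finset.mul_sum]; exact Finset.sum_congr rfl hstep
        _ = (∑ j ∈ Finset.range k, T (a j) j) + ∑ j ∈ Finset.range k, T (g (j+1)) (j+1) :=
            Finset.sum_add_distrib
        _ = (∑ j ∈ Finset.range (k+1), T (a j) j) + ∑ j ∈ Finset.range (k+1), T (g j) j := by
            rw [Finset.sum_range_succ, Finset.sum_range_succ']
            have hz1 : T (a k) k = 0 := by
              simp only [hT]
              rw [haz k le_rfl,
                zero_smul_K,
                mulOp_zero, zero_mul]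
            have hz2 : T (g 0) 0 = 0 := by
              simp only [hT, hg]
              rw [zero_smul_K,
                mulOp_zero, zero_mul]
            rw [hz1, hz2, add_zero, add_zero]
        _ = ∑ j ∈ Finset.range (k+1), (T (a j) j + T (g j) j) := Finset.sum_add_distrib.symm
        _ = ∑ j ∈ Finset.range (k+1),
              mulOp ((a j + g j) • tpow (((k:ℤ)+1)*d + e*j)) * Xop m ^ (k+1-j) := by
            refine Finset.sum_congr rfl fun j _ => ?_
            simp only [hT]
            rw [add_smul_K, mulOp_add]
            exact (add_mul _ _ _).symm

/-- In `K{x, δ_m}`: `(t^d x)^k = Σ_{j=0}^{k-1} a_j t^(kd+(m-1)j) x^(k-j)` for some constants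
`a_j ∈ ℂ` with `a_0 = 1`, as an identity of the associated operators on `K`. -/
theorem stmt_1 (m : ℕ) (hm : 1 ≤ m) (d : ℤ) (hd : d ≠ 0) (k : ℕ) (hk : 1 ≤ k) :
    ∃ a : ℕ → ℂ, a 0 = 1 ∧
      (mulOp (tpow d) * Xop m) ^ k =
        ∑ j ∈ Finset.range k,
          mulOp (a j • tpow ((k : ℤ) * d + ((m : ℤ) - 1) * (j : ℤ))) * Xop m ^ (k - j) := by
  obtain ⟨a, ha0, -, heq⟩ := main_aux m hm d k hk
  exact ⟨a, ha0, heq⟩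
end
end

section
/- With notation as in the change-of-variables lemma: if additionally ḡ(X) = g(X) mod s equals (X + λ)^n for some λ ∈ ℂ, then λ ≠ 0 and v_t(a_i) = i·r for all i (so the Newton polygon of f has a single slope r, and r is an integer since v_t(a₁) = r). -/
set_option maxHeartbeats 1000000
set_option synthInstance.maxHeartbeats 1000000

noncomputable section

lemma dd_coeff (f : K) (d : ℤ) : (dd f).coeff d = (d:ℂ) * f.coeff d := rfl
lemma mulOp_apply (x f : K) : mulOp x f = x * f := rfl
lemma ddE_single (m : ℤ) (a : ℂ) : ddE (HahnSeries.single m a) = HahnSeries.single m ((m:ℂ) * a) := by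
  ext d
  rw [show (ddE (HahnSeries.single m a)).coeff d = (d:ℂ) * (HahnSeries.single m a).coeff d from rfl]
  by_cases h : d = m
  · subst h; simp
  · simp [HahnSeries.coeff_single_of_ne h]

lemma sm_single (q : ℕ) (m : ℤ) (a : ℂ) :
    ((q : ℂ)⁻¹ • ddE) (HahnSeries.single m a) = HahnSeries.single m ((m:ℂ)/(q:ℂ) * a) := by
  rw [LinearMap.smul_apply, ddE_single]
  ext d
  by_cases h : d = m
  · subst h; simp [HahnSeries.coeff_single_same, div_mul_eq_mul_div, mul_div_assoc]; ring
  · simp [HahnSeries.coeff_single_of_ne h]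

lemma tpow_mul_single (e m : ℤ) (a : ℂ) :
    tpow e * HahnSeries.single m a = HahnSeries.single (e + m) a := by
  rw [tpow, HahnSeries.single_mul_single, one_mul]

lemma Apow (p : ℤ) (q : ℕ) (j : ℕ) (m : ℤ) (a : ℂ) :
    ((mulOp (tpow (-p)) * ((q : ℂ)⁻¹ • ddE)) ^ j) (HahnSeries.single m a) =
      HahnSeries.single (m - j * p)
        ((∏ k ∈ Finset.range j, (((m : ℂ) - (k : ℂ) * (p : ℂ)) / (q : ℂ))) * a) := by
  induction j generalizing m a with
  | zero => simp
  | succ j ih =>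
    rw [pow_succ, Module.End.mul_apply, Module.End.mul_apply, sm_single, mulOp_apply,
      tpow_mul_single, show -p + m = m - p by ring, ih]
    have hprod : (∏ k ∈ Finset.range j, ((((m - p) : ℤ):ℂ) - (k:ℂ)*(p:ℂ))/(q:ℂ))
        = ∏ k ∈ Finset.range j, (((m:ℂ) - (((k+1 : ℕ)):ℂ)*(p:ℂ))/(q:ℂ)) :=
      Finset.prod_congr rfl (fun k _ => by push_cast; ring)
    rw [hprod]
    congr 1
    · push_cast; ring
    · rw [Finset.prod_range_succ']
      push_cast
      ring

lemma Dpow (q : ℕ) (j : ℕ) (m : ℤ) (a : ℂ) :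
    (((q : ℂ)⁻¹ • ddE) ^ j) (HahnSeries.single m a) =
      HahnSeries.single m (((m : ℂ)/(q : ℂ)) ^ j * a) := by
  induction j generalizing m a with
  | zero => simp
  | succ j ih => rw [pow_succ, Module.End.mul_apply, sm_single, ih]; ring_nf

lemma tpow_mul_coeff_s9 (e : ℤ) (y : K) (d : ℤ) : (tpow e * y).coeff d = y.coeff (d - e) := by
  rw [tpow, show d = (d - e) + e by ring, HahnSeries.coeff_single_mul_add, one_mul]
  congr 1; ring

lemma mul_single_coeff (y : K) (m : ℤ) (r : ℂ) (d : ℤ) :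
    (y * HahnSeries.single m r).coeff d = y.coeff (d - m) * r := by
  rw [show d = (d - m) + m by ring, HahnSeries.coeff_mul_single_add]
  congr 2; ring

lemma ofPS_coeff_neg (x : PowerSeries ℂ) (d : ℤ) (hd : d < 0) : (ofPS x).coeff d = 0 := by
  rw [ofPS, HahnSeries.ofPowerSeries_apply]
  apply HahnSeries.embDomain_notin_range
  rintro ⟨a, ha⟩
  have ha' : ((a:ℕ):ℤ) = d := ha
  omega

lemma ofPS_coeff_nat (x : PowerSeries ℂ) (a : ℕ) :
    (ofPS x).coeff (a : ℤ) = PowerSeries.coeff a x := by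
  rw [ofPS, HahnSeries.ofPowerSeries_apply_coeff]

lemma ofPS_coeff_zero (x : PowerSeries ℂ) :
    (ofPS x).coeff (0 : ℤ) = PowerSeries.constantCoeff x := by
  have := ofPS_coeff_nat x 0
  simpa using this

lemma embHom_coeff (q : ℕ) (hq : 0 < q) (x : K) (e : ℤ) :
    (embHom q hq x).coeff ((q : ℤ) * e) = x.coeff e := by
  exact HahnSeries.embDomain_coeff (a := e)

lemma embHom_coeff_nd (q : ℕ) (hq : 0 < q) (x : K) (d : ℤ) (hd : ¬ ((q:ℤ) ∣ d)) :
    (embHom q hq x).coeff d = 0 := by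
  apply HahnSeries.embDomain_notin_range
  rintro ⟨a, ha⟩
  exact hd ⟨a, ha.symm⟩

lemma hahn_sum_coeff {α : Type*} (s : Finset α) (f : α → K) (d : ℤ) :
    (∑ i ∈ s, f i).coeff d = ∑ i ∈ s, (f i).coeff d :=
  map_sum (HahnSeries.coeff.addMonoidHom d) f s

lemma master (n : ℕ) (c : ℕ → K) (p : ℤ) (q : ℕ) (hq : 0 < q) (b : ℕ → PowerSeries ℂ)
    (hg : mulOp (tpow (-((n : ℤ) * p))) *
          (∑ j ∈ Finset.range (n + 1), mulOp (embHom q hq (c j)) * ((q : ℂ)⁻¹ • ddE) ^ j) =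
        ∑ j ∈ Finset.range (n + 1),
          mulOp (ofPS (b j)) * (mulOp (tpow (-p)) * ((q : ℂ)⁻¹ • ddE)) ^ j)
    (j₀ : ℕ) (m : ℤ) :
    ∑ j ∈ Finset.range (n + 1),
        (embHom q hq (c j)).coeff (((n : ℤ) - (j₀ : ℤ)) * p) * ((m : ℂ)/(q : ℂ)) ^ j =
      ∑ j ∈ Finset.range (n + 1),
        (ofPS (b j)).coeff (((j : ℤ) - (j₀ : ℤ)) * p) *
          ∏ k ∈ Finset.range j, (((m : ℂ) - (k : ℂ) * (p : ℂ)) / (q : ℂ)) := by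
  have h1 := congrArg (fun T : Module.End ℂ K =>
    (T (HahnSeries.single m (1:ℂ))).coeff (m - (j₀ : ℤ) * p)) hg
  simp only [Module.End.mul_apply, LinearMap.sum_apply, Dpow, Apow, mulOp_apply,
    Finset.mul_sum, hahn_sum_coeff] at h1
  calc ∑ j ∈ Finset.range (n + 1),
        (embHom q hq (c j)).coeff (((n : ℤ) - (j₀ : ℤ)) * p) * ((m : ℂ)/(q : ℂ)) ^ j
      = ∑ j ∈ Finset.range (n + 1),
        (tpow (-((n : ℤ) * p)) * (embHom q hq (c j) *
          HahnSeries.single m (((m : ℂ)/(q : ℂ)) ^ j * 1))).coeff (m - (j₀ : ℤ) * p) := by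
        apply Finset.sum_congr rfl
        intro j _
        rw [tpow_mul_coeff_s9, mul_single_coeff, mul_one]
        congr 1
        ring
    _ = ∑ j ∈ Finset.range (n + 1),
        (ofPS (b j) * HahnSeries.single (m - (j : ℤ) * p)
          ((∏ k ∈ Finset.range j, (((m : ℂ) - (k : ℂ) * (p : ℂ)) / (q : ℂ))) * 1)).coeff
            (m - (j₀ : ℤ) * p) := h1
    _ = _ := by
        apply Finset.sum_congr rfl
        intro j _
        rw [mul_single_coeff, mul_one,
          show m - (j₀:ℤ)*p - (m - (j:ℤ)*p) = ((j:ℤ) - (j₀:ℤ))*p by ring]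

lemma prodXsub (j : ℕ) (α : ℕ → ℂ) :
    (∏ k ∈ Finset.range j, (Polynomial.X - Polynomial.C (α k))).natDegree = j ∧
    (∏ k ∈ Finset.range j, (Polynomial.X - Polynomial.C (α k))).Monic := by
  have hm : (∏ k ∈ Finset.range j, (Polynomial.X - Polynomial.C (α k))).Monic :=
    Polynomial.monic_prod_of_monic _ _ (fun k _ => Polynomial.monic_X_sub_C (α k))
  refine ⟨?_, hm⟩
  rw [Polynomial.natDegree_prod_of_monic _ _ (fun k _ => Polynomial.monic_X_sub_C (α k))]
  simp [Polynomial.natDegree_X_sub_C]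

lemma key (n : ℕ) (c : ℕ → K) (hmonic : c n = 1) (p : ℤ) (hp : p < 0)
    (q : ℕ) (hq : 0 < q)
    (hmin : ∀ i, 1 ≤ i → i ≤ n → c (n - i) ≠ 0 →
      (p : ℚ) / (q : ℚ) ≤ ((c (n - i)).order : ℚ) / (i : ℚ))
    (b : ℕ → PowerSeries ℂ)
    (hg : mulOp (tpow (-((n : ℤ) * p))) *
          (∑ j ∈ Finset.range (n + 1), mulOp (embHom q hq (c j)) * ((q : ℂ)⁻¹ • ddE) ^ j) =
        ∑ j ∈ Finset.range (n + 1),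
          mulOp (ofPS (b j)) * (mulOp (tpow (-p)) * ((q : ℂ)⁻¹ • ddE)) ^ j)
    (j₀ : ℕ) (hj₀ : j₀ < n) :
    PowerSeries.constantCoeff (b j₀) =
      (embHom q hq (c j₀)).coeff (((n : ℤ) - (j₀ : ℤ)) * p) := by
  set A : ℕ → ℂ := fun j => (embHom q hq (c j)).coeff (((n : ℤ) - (j₀ : ℤ)) * p) with hA
  set B : ℕ → ℂ := fun j => (ofPS (b j)).coeff (((j : ℤ) - (j₀ : ℤ)) * p) with hB
  -- vanishing of A above j₀
  have hAvan : ∀ j, j₀ < j → j ≤ n → A j = 0 := by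
    intro j hj hjn
    rcases eq_or_lt_of_le hjn with heq | hjlt
    · -- j = n
      rw [hA]
      simp only [heq, hmonic, map_one]
      rw [← HahnSeries.single_zero_one, HahnSeries.coeff_single_of_ne]
      have h1 : (0:ℤ) < (n:ℤ) - (j₀:ℤ) := by
        have : (j₀ : ℤ) < (n : ℤ) := by exact_mod_cast hj₀
        linarith
      exact ne_of_lt (mul_neg_of_pos_of_neg h1 hp)
    · -- j₀ < j < n
      by_cases hc : c j = 0
      · simp [hA, hc]
      by_cases hdvd : ((q:ℤ) ∣ ((n : ℤ) - (j₀ : ℤ)) * p)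
      · obtain ⟨e, he⟩ := hdvd
        rw [hA]
        simp only
        rw [he, embHom_coeff]
        apply HahnSeries.coeff_eq_zero_of_lt_order
        by_contra hlt
        push_neg at hlt  -- (c j).order ≤ e
        have hcj : c (n - (n - j)) = c j := by congr 1; omega
        have h1 := hmin (n - j) (by omega) (by omega) (by rw [hcj]; exact hc)
        rw [hcj] at h1
        have hiq : ((n - j : ℕ) : ℚ) > 0 := by
          have : 0 < n - j := by omega
          exact_mod_cast this
        have hqq : ((q : ℚ)) > 0 := by exact_mod_cast hq
        rw [div_le_div_iff₀ hqq hiq] at h1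
        have h1' : p * ((n : ℤ) - (j : ℤ)) ≤ (c j).order * q := by
          have : ((n - j : ℕ) : ℚ) = ((n : ℚ) - (j : ℚ)) := by
            push_cast [Nat.cast_sub (le_of_lt hjlt)]; ring
          rw [this] at h1
          exact_mod_cast h1
        have h2 : (c j).order * (q : ℤ) ≤ e * q :=
          mul_le_mul_of_nonneg_right hlt (by positivity)
        have h3 : e * (q:ℤ) = ((n : ℤ) - (j₀ : ℤ)) * p := by rw [he]; ring
        have h4 : p * ((n : ℤ) - (j : ℤ)) > p * ((n : ℤ) - (j₀ : ℤ)) := by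
          apply mul_lt_mul_of_neg_left _ hp
          have : (j₀ : ℤ) < (j : ℤ) := by exact_mod_cast hj
          linarith
        nlinarith
      · rw [hA]; exact embHom_coeff_nd q hq (c j) _ hdvd
  -- vanishing of B above j₀
  have hBvan : ∀ j, j₀ < j → B j = 0 := by
    intro j hj
    rw [hB]
    apply ofPS_coeff_neg
    apply mul_neg_of_pos_of_neg _ hp
    have : (j₀ : ℤ) < (j : ℤ) := by exact_mod_cast hj
    linarith
  have hB0 : B j₀ = PowerSeries.constantCoeff (b j₀) := by
    rw [hB]; simp only [sub_self, zero_mul]; exact ofPS_coeff_zero _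
  -- the polynomials
  set L : Polynomial ℂ := ∑ j ∈ Finset.range (n + 1),
    Polynomial.C (A j) * (Polynomial.C ((q : ℂ))⁻¹ * Polynomial.X) ^ j with hL
  set R : Polynomial ℂ := ∑ j ∈ Finset.range (n + 1),
    Polynomial.C (B j) * ∏ k ∈ Finset.range j,
      (Polynomial.C ((q : ℂ))⁻¹ * (Polynomial.X - Polynomial.C ((k : ℂ) * (p : ℂ)))) with hR
  have heval : ∀ m : ℤ, L.eval ((m : ℤ) : ℂ) = R.eval ((m : ℤ) : ℂ) := by
    intro m
    have hm := master n c p q hq b hg j₀ m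
    rw [hL, hR]
    simp only [Polynomial.eval_finset_sum, Polynomial.eval_mul, Polynomial.eval_pow,
      Polynomial.eval_prod, Polynomial.eval_C, Polynomial.eval_X, Polynomial.eval_sub]
    calc ∑ j ∈ Finset.range (n + 1), A j * (((q:ℂ))⁻¹ * (m:ℂ)) ^ j
        = ∑ j ∈ Finset.range (n + 1), A j * ((m : ℂ)/(q : ℂ)) ^ j := by
          apply Finset.sum_congr rfl; intro j _; rw [div_eq_inv_mul]
      _ = ∑ j ∈ Finset.range (n + 1), B j *
            ∏ k ∈ Finset.range j, (((m : ℂ) - (k : ℂ) * (p : ℂ)) / (q : ℂ)) := hm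
      _ = _ := by
          apply Finset.sum_congr rfl; intro j _
          congr 1
          apply Finset.prod_congr rfl; intro k _
          rw [div_eq_inv_mul]
  have hLR : L = R := by
    have hroot : {x : ℂ | (L - R).IsRoot x}.Infinite := by
      apply Set.Infinite.mono _ (Set.infinite_range_of_injective
        (f := (Int.cast : ℤ → ℂ)) (fun a b h => by exact_mod_cast h))
      rintro x ⟨m, rfl⟩
      simp only [Set.mem_setOf_eq, Polynomial.IsRoot, Polynomial.eval_sub, heval m, sub_self]
    exact eq_of_sub_eq_zero (Polynomial.eq_zero_of_infinite_isRoot (L - R) hroot)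
  have hmem : j₀ ∈ Finset.range (n + 1) := Finset.mem_range.mpr (by omega)
  have hcL : L.coeff j₀ = A j₀ * ((q:ℂ)⁻¹) ^ j₀ := by
    rw [hL, Polynomial.finset_sum_coeff]
    have hterm : ∀ j ∈ Finset.range (n + 1),
        (Polynomial.C (A j) * (Polynomial.C ((q:ℂ))⁻¹ * Polynomial.X) ^ j).coeff j₀ =
          if j₀ = j then A j * ((q:ℂ)⁻¹) ^ j else 0 := by
      intro j _
      rw [mul_pow, ← Polynomial.C_pow, ← mul_assoc, ← Polynomial.C_mul,
        Polynomial.coeff_C_mul, Polynomial.coeff_X_pow]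
      split_ifs <;> simp [mul_comm]
    rw [Finset.sum_congr rfl hterm, Finset.sum_ite_eq, if_pos hmem]
  have hcR : R.coeff j₀ = B j₀ * ((q:ℂ)⁻¹) ^ j₀ := by
    rw [hR, Polynomial.finset_sum_coeff]
    have hterm : ∀ j ∈ Finset.range (n + 1),
        (Polynomial.C (B j) * ∏ k ∈ Finset.range j,
          (Polynomial.C ((q:ℂ))⁻¹ * (Polynomial.X - Polynomial.C ((k : ℂ) * (p : ℂ))))).coeff j₀ =
          if j₀ = j then B j * ((q:ℂ)⁻¹) ^ j else 0 := by
      intro j _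
      have hsplit : (∏ k ∈ Finset.range j,
          (Polynomial.C ((q:ℂ))⁻¹ * (Polynomial.X - Polynomial.C ((k : ℂ) * (p : ℂ))))) =
          Polynomial.C (((q:ℂ))⁻¹ ^ j) *
            ∏ k ∈ Finset.range j, (Polynomial.X - Polynomial.C ((k : ℂ) * (p : ℂ))) := by
        rw [Finset.prod_mul_distrib, Finset.prod_const, Finset.card_range, Polynomial.C_pow]
      obtain ⟨hdeg, hmon⟩ := prodXsub j (fun k => (k : ℂ) * (p : ℂ))
      rw [hsplit, ← mul_assoc, ← Polynomial.C_mul, Polynomial.coeff_C_mul]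
      rcases lt_trichotomy j j₀ with hlt | rfl | hgt
      · rw [Polynomial.coeff_eq_zero_of_natDegree_lt (by rw [hdeg]; exact hlt), mul_zero,
          if_neg (by omega)]
      · have h1 : (∏ k ∈ Finset.range j,
            (Polynomial.X - Polynomial.C ((k : ℂ) * (p : ℂ)))).coeff j = 1 := by
          have h2 := Polynomial.Monic.coeff_natDegree hmon
          rwa [hdeg] at h2
        rw [if_pos rfl, h1, mul_one, mul_comm]
      · rw [if_neg (by omega), hBvan j hgt, zero_mul, zero_mul]
    rw [Finset.sum_congr rfl hterm, Finset.sum_ite_eq, if_pos hmem]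
  have hfin : A j₀ * ((q:ℂ)⁻¹) ^ j₀ = B j₀ * ((q:ℂ)⁻¹) ^ j₀ := by
    rw [← hcL, ← hcR, hLR]
  have hqne : (((q:ℂ))⁻¹) ^ j₀ ≠ 0 := by
    apply pow_ne_zero
    simp only [ne_eq, inv_eq_zero, Nat.cast_eq_zero]
    omega
  have : A j₀ = B j₀ := mul_right_cancel₀ hqne hfin
  rw [← hB0, ← this]

lemma red_coeff (n : ℕ) (b : ℕ → PowerSeries ℂ) (j : ℕ) (hj : j ≤ n) :
    (red n b).coeff j = PowerSeries.constantCoeff (b j) := by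
  rw [red, Polynomial.finset_sum_coeff]
  have hterm : ∀ i ∈ Finset.range (n + 1),
      (Polynomial.C (PowerSeries.constantCoeff (b i)) * Polynomial.X ^ i).coeff j =
        if j = i then PowerSeries.constantCoeff (b i) else 0 := by
    intro i _
    rw [Polynomial.coeff_C_mul, Polynomial.coeff_X_pow]
    split_ifs <;> simp
  rw [Finset.sum_congr rfl hterm, Finset.sum_ite_eq, if_pos (Finset.mem_range.mpr (by omega))]

/-- If moreover `ḡ(X) = (X + λ)^n` mod `s`, then `λ ≠ 0`, the slope `r = p/q` is an
integer (`q = 1`), and `v_t(a_i) = i ⬝ r` for all `i` (single-slope Newton polygon). -/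
theorem stmt_9 (n : ℕ) (hn : 1 ≤ n) (c : ℕ → K) (hmonic : c n = 1)
    (p : ℤ) (q : ℕ) (hq : 0 < q) (hcop : Int.gcd p (q : ℤ) = 1)
    (hneg : (p : ℚ) / (q : ℚ) < 0)
    (hmin : ∀ i, 1 ≤ i → i ≤ n → c (n - i) ≠ 0 →
      (p : ℚ) / (q : ℚ) ≤ ((c (n - i)).order : ℚ) / (i : ℚ))
    (hattain : ∃ i, 1 ≤ i ∧ i ≤ n ∧ c (n - i) ≠ 0 ∧
      (p : ℚ) / (q : ℚ) = ((c (n - i)).order : ℚ) / (i : ℚ))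
    (b : ℕ → PowerSeries ℂ) (hb : b n = 1)
    (hg : mulOp (tpow (-((n : ℤ) * p))) *
          (∑ j ∈ Finset.range (n + 1), mulOp (embHom q hq (c j)) * ((q : ℂ)⁻¹ • ddE) ^ j) =
        ∑ j ∈ Finset.range (n + 1),
          mulOp (ofPS (b j)) * (mulOp (tpow (-p)) * ((q : ℂ)⁻¹ • ddE)) ^ j)
    (lam : ℂ) (hbar : red n b = (Polynomial.X + Polynomial.C lam) ^ n) :
    lam ≠ 0 ∧ q = 1 ∧
      ∀ i, 1 ≤ i → i ≤ n →
        c (n - i) ≠ 0 ∧ ((c (n - i)).order : ℚ) = (i : ℚ) * ((p : ℚ) / (q : ℚ)) := by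
  have hp : p < 0 := by
    by_contra h
    push_neg at h
    have : (0:ℚ) ≤ (p:ℚ)/(q:ℚ) := div_nonneg (by exact_mod_cast h) (by positivity)
    linarith
  have hconst : ∀ j, j ≤ n → PowerSeries.constantCoeff (b j) =
      lam ^ (n - j) * (Nat.choose n j : ℂ) := by
    intro j hj
    rw [← red_coeff n b j hj, hbar, Polynomial.coeff_X_add_C_pow]
  -- lam ≠ 0
  obtain ⟨i₀, hi₀1, hi₀n, hc₀, hord₀⟩ := hattain
  have hj₀ : n - i₀ < n := by omega
  have hkey₀ := key n c hmonic p hp q hq hmin b hg (n - i₀) hj₀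
  have hcast₀ : ((n:ℤ) - ((n - i₀ : ℕ):ℤ)) * p = (i₀:ℤ) * p := by
    congr 1; omega
  have hordeq : (i₀:ℤ) * p = (q:ℤ) * (c (n - i₀)).order := by
    rw [div_eq_div_iff (by positivity) (Nat.cast_ne_zero.mpr (by omega) : (i₀:ℚ) ≠ 0)] at hord₀
    have : p * (i₀:ℤ) = (c (n - i₀)).order * q := by exact_mod_cast hord₀
    linarith
  rw [hcast₀, hordeq, embHom_coeff] at hkey₀
  have hne₀ : PowerSeries.constantCoeff (b (n - i₀)) ≠ 0 := by
    rw [hkey₀]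
    exact HahnSeries.coeff_order_eq_zero.not.mpr hc₀
  have hlam : lam ≠ 0 := by
    intro h
    rw [hconst _ (by omega), h, zero_pow (by omega : n - (n - i₀) ≠ 0), zero_mul] at hne₀
    exact hne₀ rfl
  -- the main statement for each i
  have hmain : ∀ i, 1 ≤ i → i ≤ n →
      c (n - i) ≠ 0 ∧ ((c (n - i)).order : ℚ) = (i:ℚ) * ((p:ℚ)/(q:ℚ)) ∧
        (q:ℤ) ∣ (i:ℤ) * p := by
    intro i h1 h1n
    have hj : n - i < n := by omega
    have hkey := key n c hmonic p hp q hq hmin b hg (n - i) hj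
    have hcast : ((n:ℤ) - ((n - i : ℕ):ℤ)) * p = (i:ℤ) * p := by congr 1; omega
    rw [hcast] at hkey
    have hne : (embHom q hq (c (n - i))).coeff ((i:ℤ) * p) ≠ 0 := by
      rw [← hkey, hconst _ (by omega)]
      apply mul_ne_zero (pow_ne_zero _ hlam)
      exact_mod_cast (Nat.choose_pos (by omega : n - i ≤ n)).ne'
    have hdvd : (q:ℤ) ∣ (i:ℤ) * p := by
      by_contra hd
      exact hne (embHom_coeff_nd q hq _ _ hd)
    obtain ⟨e, he⟩ := hdvd
    rw [he, embHom_coeff] at hne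
    have hcne : c (n - i) ≠ 0 := by
      intro h
      rw [h] at hne
      simp at hne
    have horder : (c (n - i)).order ≤ e := by
      by_contra hlt
      push_neg at hlt
      exact hne (HahnSeries.coeff_eq_zero_of_lt_order hlt)
    have hmin' := hmin i h1 h1n hcne
    rw [div_le_div_iff₀ (by positivity) (by exact_mod_cast h1 : (0:ℚ) < (i:ℚ))] at hmin'
    have hint : p * (i:ℤ) ≤ (c (n - i)).order * q := by exact_mod_cast hmin'
    have h2 : (c (n - i)).order * (q:ℤ) ≤ e * q :=
      mul_le_mul_of_nonneg_right horder (by positivity)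
    have h3 : e * (q:ℤ) = (i:ℤ) * p := by rw [he]; ring
    have hordq : (c (n - i)).order * (q:ℤ) = p * i := le_antisymm (by linarith) (by linarith)
    refine ⟨hcne, ?_, ⟨e, he⟩⟩
    have hq0 : ((q:ℚ)) ≠ 0 := by positivity
    rw [mul_div_assoc' , eq_div_iff hq0]
    push_cast
    exact_mod_cast (by linarith : ((c (n - i)).order : ℤ) * q = (i:ℤ) * p)
  have hq1 : q = 1 := by
    obtain ⟨-, -, e, he⟩ := hmain 1 le_rfl hn
    have hqp : (q:ℤ) ∣ p := ⟨e, by push_cast at he; linarith⟩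
    have : q ∣ Int.gcd p (q:ℤ) :=
      Nat.dvd_gcd (Int.natAbs_dvd_natAbs.mpr (by simpa using hqp)) (by simp)
    rw [hcop] at this
    exact Nat.dvd_one.mp this
  exact ⟨hlam, hq1, fun i h1 h2 => ⟨(hmain i h1 h2).1, (hmain i h1 h2).2.1⟩⟩
end
end
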